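/- Let f : (0,1) → ℝ be C² and define h : (0,∞) → ℝ by h(x) = f(1/cosh(x)) − π/2. Then f satisfies f''(ρ) + (2/ρ) f'(ρ) − sin(2 f(ρ)) / (ρ² (1 − ρ²)) = 0 on (0,1) if and only if h satisfies h''(x) − coth(x) h'(x) + sin(2 h(x)) = 0 on (0,∞). -/

import Mathlib

open Real Set Filter Topology

lemma cov_key (f : ℝ → ℝ) (hf : ContDiffOn ℝ 2 f (Ioo 0 1)) (x : ℝ) (hx : 0 < x) :
    deriv (deriv (fun y => f (1 / Real.cosh y) - π / 2)) x
        - (Real.cosh x / Real.sinh x)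
            * deriv (fun y => f (1 / Real.cosh y) - π / 2) x
        + Real.sin (2 * (f (1 / Real.cosh x) - π / 2))
      = (Real.sinh x) ^ 2 / (Real.cosh x) ^ 4 *
        (deriv (deriv f) (1 / Real.cosh x) + 2 / (1 / Real.cosh x) * deriv f (1 / Real.cosh x)
          - Real.sin (2 * f (1 / Real.cosh x))
              / ((1 / Real.cosh x) ^ 2 * (1 - (1 / Real.cosh x) ^ 2))) := by
  have hcpos : ∀ y : ℝ, (0:ℝ) < Real.cosh y := fun y => Real.cosh_pos y
  have hmem : ∀ y : ℝ, 0 < y → (1 / Real.cosh y) ∈ Ioo (0:ℝ) 1 := by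
    intro y hy
    constructor
    · positivity
    · rw [div_lt_one (hcpos y)]
      exact Real.one_lt_cosh.2 hy.ne'
  -- derivative of g y = 1 / cosh y
  have hg : ∀ y : ℝ, HasDerivAt (fun z => 1 / Real.cosh z)
      (-(Real.sinh y) / Real.cosh y ^ 2) y := by
    intro y
    simpa [one_div, neg_div, Pi.inv_def] using (Real.hasDerivAt_cosh y).inv (hcpos y).ne'
  have hfd : DifferentiableOn ℝ f (Ioo 0 1) := hf.differentiableOn (by norm_num)
  have hf1 : ContDiffOn ℝ 1 (deriv f) (Ioo 0 1) := by
    have := hf.deriv_of_isOpen isOpen_Ioo (m := 1) (by norm_num)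
    exact this
  -- first derivative of h on Ioi 0
  have hderiv : ∀ y ∈ Ioi (0:ℝ), deriv (fun z => f (1 / Real.cosh z) - π / 2) y
      = deriv f (1 / Real.cosh y) * (-(Real.sinh y) / Real.cosh y ^ 2) := by
    intro y hy
    have hfy : DifferentiableAt ℝ f (1 / Real.cosh y) :=
      (hfd.differentiableAt (isOpen_Ioo.mem_nhds (hmem y hy)))
    exact (((hfy.hasDerivAt.comp y (hg y)).sub_const (π / 2))).deriv
  have hx' : x ∈ Ioi (0:ℝ) := hx
  set ρ := 1 / Real.cosh x with hρdef
  have hρ : ρ ∈ Ioo (0:ℝ) 1 := hmem x hx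
  -- second derivative
  have hEq : deriv (fun z => f (1 / Real.cosh z) - π / 2)
      =ᶠ[𝓝 x] fun y => deriv f (1 / Real.cosh y) * (-(Real.sinh y) / Real.cosh y ^ 2) :=
    Filter.eventuallyEq_of_mem (isOpen_Ioi.mem_nhds hx') hderiv
  have hF1 : HasDerivAt (deriv f) (deriv (deriv f) ρ) ρ :=
    ((hf1.differentiableOn one_ne_zero).differentiableAt
      (isOpen_Ioo.mem_nhds hρ)).hasDerivAt
  have h1 : HasDerivAt (fun y => deriv f (1 / Real.cosh y))
      (deriv (deriv f) ρ * (-(Real.sinh x) / Real.cosh x ^ 2)) x :=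
    by have := hF1.comp x (hg x); exact this
  have h2 : HasDerivAt (fun y => -(Real.sinh y) / Real.cosh y ^ 2)
      ((-(Real.cosh x) * Real.cosh x ^ 2 - -(Real.sinh x) * (2 * Real.cosh x ^ 1 * Real.sinh x))
        / (Real.cosh x ^ 2) ^ 2) x := by
    exact ((Real.hasDerivAt_sinh x).neg.div ((Real.hasDerivAt_cosh x).pow 2)
      (by positivity))
  have h2' : deriv (deriv (fun z => f (1 / Real.cosh z) - π / 2)) x
      = deriv (deriv f) ρ * (-(Real.sinh x) / Real.cosh x ^ 2) * (-(Real.sinh x) / Real.cosh x ^ 2)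
        + deriv f ρ *
          ((-(Real.cosh x) * Real.cosh x ^ 2 -
            -(Real.sinh x) * (2 * Real.cosh x ^ 1 * Real.sinh x)) / (Real.cosh x ^ 2) ^ 2) := by
    rw [hEq.deriv_eq]
    exact (h1.mul h2).deriv
  rw [h2', hderiv x hx']
  have hsin : Real.sin (2 * (f ρ - π / 2)) = -Real.sin (2 * f ρ) := by
    rw [show 2 * (f ρ - π / 2) = 2 * f ρ - π by ring, Real.sin_sub_pi]
  rw [hsin]
  have hc : Real.cosh x ≠ 0 := (hcpos x).ne'
  have hs : Real.sinh x ≠ 0 := (Real.sinh_pos_iff.2 hx).ne'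
  have hsq : Real.cosh x ^ 2 = Real.sinh x ^ 2 + 1 := Real.cosh_sq x
  have h1ρ : 1 - ρ ^ 2 = Real.sinh x ^ 2 / Real.cosh x ^ 2 := by
    rw [hρdef]; field_simp; linarith
  rw [h1ρ, hρdef]
  field_simp
  ring

lemma cov_surj {ρ : ℝ} (hρ : ρ ∈ Ioo (0:ℝ) 1) :
    ∃ x : ℝ, 0 < x ∧ 1 / Real.cosh x = ρ := by
  obtain ⟨hρ0, hρ1⟩ := hρ
  have ht : 1 < 1 / ρ := by rw [lt_div_iff₀ hρ0]; linarith
  set t := 1 / ρ with htdef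
  have htsq : 0 < t ^ 2 - 1 := by nlinarith
  have hsq : Real.sqrt (t ^ 2 - 1) ^ 2 = t ^ 2 - 1 := Real.sq_sqrt htsq.le
  have hsqpos : 0 < Real.sqrt (t ^ 2 - 1) := Real.sqrt_pos.2 htsq
  set u := t + Real.sqrt (t ^ 2 - 1) with hudef
  have hu1 : 1 < u := by nlinarith
  have hu0 : 0 < u := lt_trans one_pos hu1
  refine ⟨Real.log u, Real.log_pos hu1, ?_⟩
  have hinv : u⁻¹ = t - Real.sqrt (t ^ 2 - 1) := by
    have hprod : u * (t - Real.sqrt (t ^ 2 - 1)) = 1 := by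
      rw [hudef]; nlinarith
    field_simp [hu0.ne'] at hprod ⊢
    linarith [hprod]
  rw [Real.cosh_log hu0, hinv]
  rw [hudef]
  have : t + Real.sqrt (t ^ 2 - 1) + (t - Real.sqrt (t ^ 2 - 1)) = 2 * t := by ring
  rw [this]
  rw [htdef]
  field_simp

/-- The change of variables (13): with `ρ = 1/cosh x` and `h(x) = f(ρ) - π/2`, a `C²`
function `f` satisfies equation (9), `f'' + (2/ρ) f' - sin(2f)/(ρ²(1-ρ²)) = 0` on
`(0,1)`, if and only if `h` satisfies equation (14), `h'' - coth(x) h' + sin(2h) = 0`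
on `(0,∞)`. -/
theorem change_of_variables_eq9_iff_eq14
    (f : ℝ → ℝ) (hf : ContDiffOn ℝ 2 f (Ioo 0 1)) :
    (∀ ρ ∈ Ioo (0:ℝ) 1,
      deriv (deriv f) ρ + 2 / ρ * deriv f ρ
        - Real.sin (2 * f ρ) / (ρ ^ 2 * (1 - ρ ^ 2)) = 0) ↔
    (∀ x ∈ Ioi (0:ℝ),
      deriv (deriv (fun y => f (1 / Real.cosh y) - π / 2)) x
        - (Real.cosh x / Real.sinh x)
            * deriv (fun y => f (1 / Real.cosh y) - π / 2) x
        + Real.sin (2 * (f (1 / Real.cosh x) - π / 2)) = 0) := by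
  constructor
  · intro h9 x hx
    rw [mem_Ioi] at hx
    have hmem : (1 / Real.cosh x) ∈ Ioo (0:ℝ) 1 := by
      constructor
      · positivity
      · rw [div_lt_one (Real.cosh_pos (x := x))]
        exact Real.one_lt_cosh.2 hx.ne'
    rw [cov_key f hf x hx, h9 _ hmem, mul_zero]
  · intro h14 ρ hρ
    obtain ⟨x, hx, hxρ⟩ := cov_surj hρ
    have := h14 x (mem_Ioi.2 hx)
    rw [cov_key f hf x hx, hxρ] at this
    have hfac : Real.sinh x ^ 2 / Real.cosh x ^ 4 ≠ 0 := by
      have hs := Real.sinh_pos_iff.2 hx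
      have hc := Real.cosh_pos (x := x)
      positivity
    exact (mul_eq_zero.1 this).resolve_left hfac
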